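/- For every permutation σ of {1,2} and every non-negative integer n: (1) F_σ(n) = (F_σ(n) ∩ V₁) ⊕ (F_σ(n) ∩ V₂); (2) F_σ(n) = (F_σ(n) ∩ W₁) ⊕ (F_σ(n) ∩ W₂). -/

import Mathlib

open Submodule

/-- For a permutation `σ` of `{1,2}`, the increasing sequence of subspaces `F_σ(n)`:
`F_σ(0) = ⊥`, `F_σ(n+1) = Σ_i (F_σ(n) + Vᵢ) ⊓ (F_σ(n) + W_{σ(i)})`. -/
noncomputable def Fsig {K E : Type*} [Field K] [AddCommGroup E] [Module K E]
    (V W : Fin 2 → Submodule K E) (σ : Equiv.Perm (Fin 2)) : ℕ → Submodule K E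
  | 0 => ⊥
  | n + 1 => ⨆ i : Fin 2, (Fsig V W σ n ⊔ V i) ⊓ (Fsig V W σ n ⊔ W (σ i))

/-- Key step: if `p` fixes `F` (as a set), `F ≤ G`, and `p` is either the identity or zero on
`S`, then `p` maps `(F ⊔ S) ∩ G` into `G`. -/
lemma proj_helper {K E : Type*} [Field K] [AddCommGroup E] [Module K E]
    (p : E →ₗ[K] E) (F G S : Submodule K E)
    (hF : ∀ x ∈ F, p x ∈ F) (hFG : F ≤ G)
    (hS : (∀ s ∈ S, p s = s) ∨ (∀ s ∈ S, p s = 0))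
    {x : E} (hx : x ∈ F ⊔ S) (hxG : x ∈ G) : p x ∈ G := by
  obtain ⟨f, hf, s, hs, rfl⟩ := mem_sup.1 hx
  rcases hS with h | h
  · have hps : p (f + s) = (f + s) - (f - p f) := by
      rw [map_add, h s hs]; abel
    rw [hps]
    exact G.sub_mem hxG (hFG (F.sub_mem hf (hF f hf)))
  · have hps : p (f + s) = p f := by rw [map_add, h s hs, add_zero]
    rw [hps]
    exact hFG (hF f hf)

/-- The theorem. -/
theorem stmt10 {K E : Type*} [Field K] [AddCommGroup E] [Module K E]
    [FiniteDimensional K E] (hchar : (2 : K) ≠ 0)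
    (V W : Fin 2 → Submodule K E)
    (hV : IsCompl (V 0) (V 1)) (hW : IsCompl (W 0) (W 1)) :
    ∀ (σ : Equiv.Perm (Fin 2)) (n : ℕ),
      (Disjoint (Fsig V W σ n ⊓ V 0) (Fsig V W σ n ⊓ V 1) ∧
        (Fsig V W σ n ⊓ V 0) ⊔ (Fsig V W σ n ⊓ V 1) = Fsig V W σ n) ∧
      (Disjoint (Fsig V W σ n ⊓ W 0) (Fsig V W σ n ⊓ W 1) ∧
        (Fsig V W σ n ⊓ W 0) ⊔ (Fsig V W σ n ⊓ W 1) = Fsig V W σ n) := by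
  -- the projections
  set pV : E →ₗ[K] E := (V 0).subtype ∘ₗ (V 0).projectionOnto (V 1) hV with hpVdef
  set pW : E →ₗ[K] E := (W 0).subtype ∘ₗ (W 0).projectionOnto (W 1) hW with hpWdef
  have hpV0 : ∀ s ∈ V 0, pV s = s := fun s hs => by
    simp [hpVdef, projectionOnto_apply_of_mem_left hV hs]
  have hpV1 : ∀ s ∈ V 1, pV s = 0 := fun s hs => by
    simp [hpVdef, projectionOnto_apply_of_mem_right hV hs]
  have hpW0 : ∀ s ∈ W 0, pW s = s := fun s hs => by
    simp [hpWdef, projectionOnto_apply_of_mem_left hW hs]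
  have hpW1 : ∀ s ∈ W 1, pW s = 0 := fun s hs => by
    simp [hpWdef, projectionOnto_apply_of_mem_right hW hs]
  have hpVmem : ∀ x : E, pV x ∈ V 0 := fun x => by
    simp only [hpVdef, LinearMap.comp_apply]; exact Submodule.coe_mem _
  have hpWmem : ∀ x : E, pW x ∈ W 0 := fun x => by
    simp only [hpWdef, LinearMap.comp_apply]; exact Submodule.coe_mem _
  have hpVsub : ∀ x : E, x - pV x ∈ V 1 := fun x => by
    have := Submodule.projection_add_projection_eq_self hV x
    have h2 : x - pV x = ((V 1).projectionOnto (V 0) hV.symm x : E) := by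
      simp only [hpVdef, LinearMap.comp_apply, coe_subtype]
      rw [sub_eq_iff_eq_add']
      exact this.symm
    rw [h2]; exact Submodule.coe_mem _
  have hpWsub : ∀ x : E, x - pW x ∈ W 1 := fun x => by
    have := Submodule.projection_add_projection_eq_self hW x
    have h2 : x - pW x = ((W 1).projectionOnto (W 0) hW.symm x : E) := by
      simp only [hpWdef, LinearMap.comp_apply, coe_subtype]
      rw [sub_eq_iff_eq_add']
      exact this.symm
    rw [h2]; exact Submodule.coe_mem _
  -- the main induction: each Fsig level is invariant under pV and pW
  have key : ∀ (σ : Equiv.Perm (Fin 2)) (n : ℕ),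
      (∀ x ∈ Fsig V W σ n, pV x ∈ Fsig V W σ n) ∧
      (∀ x ∈ Fsig V W σ n, pW x ∈ Fsig V W σ n) := by
    intro σ n
    induction n with
    | zero =>
      constructor <;> intro x hx <;>
        simp only [Fsig, Submodule.mem_bot] at hx ⊢ <;> simp [hx]
    | succ n ih =>
      obtain ⟨ihV, ihW⟩ := ih
      have hle : ∀ i : Fin 2,
          (Fsig V W σ n ⊔ V i) ⊓ (Fsig V W σ n ⊔ W (σ i)) ≤ Fsig V W σ (n + 1) := by
        intro i
        exact le_iSup (fun i : Fin 2 =>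
          (Fsig V W σ n ⊔ V i) ⊓ (Fsig V W σ n ⊔ W (σ i))) i
      have hFle : Fsig V W σ n ≤ Fsig V W σ (n + 1) :=
        le_trans (le_inf le_sup_left le_sup_left) (hle 0)
      constructor
      all_goals {
        intro x hx
        rw [show Fsig V W σ (n + 1) = ⨆ i : Fin 2,
            (Fsig V W σ n ⊔ V i) ⊓ (Fsig V W σ n ⊔ W (σ i)) from rfl] at hx
        revert hx
        rw [show (⨆ i : Fin 2, (Fsig V W σ n ⊔ V i) ⊓ (Fsig V W σ n ⊔ W (σ i))) =
            ((Fsig V W σ n ⊔ V 0) ⊓ (Fsig V W σ n ⊔ W (σ 0))) ⊔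
            ((Fsig V W σ n ⊔ V 1) ⊓ (Fsig V W σ n ⊔ W (σ 1))) by
          apply le_antisymm
          · exact iSup_le fun i => by fin_cases i <;> simp [le_sup_left, le_sup_right]
          · exact sup_le (hle 0) (hle 1)]
        intro hx
        obtain ⟨a, ha, b, hb, rfl⟩ := mem_sup.1 hx
        have haF : a ∈ Fsig V W σ (n + 1) := hle 0 ha
        have hbF : b ∈ Fsig V W σ (n + 1) := hle 1 hb
        rw [map_add]
        apply Submodule.add_mem
        · first
          | exact proj_helper pV (Fsig V W σ n) (Fsig V W σ (n + 1)) (V 0) ihV hFle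
              (Or.inl hpV0) ha.1 haF
          | exact proj_helper pW (Fsig V W σ n) (Fsig V W σ (n + 1)) (W (σ 0)) ihW hFle
              (by rcases Fin.exists_fin_two.1 ⟨σ 0, rfl⟩ with h | h <;> rw [h] <;>
                [exact Or.inl hpW0; exact Or.inr hpW1]) ha.2 haF
        · first
          | exact proj_helper pV (Fsig V W σ n) (Fsig V W σ (n + 1)) (V 1) ihV hFle
              (Or.inr hpV1) hb.1 hbF
          | exact proj_helper pW (Fsig V W σ n) (Fsig V W σ (n + 1)) (W (σ 1)) ihW hFle
              (by rcases Fin.exists_fin_two.1 ⟨σ 1, rfl⟩ with h | h <;> rw [h] <;>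
                [exact Or.inl hpW0; exact Or.inr hpW1]) hb.2 hbF
      }
  -- conclude
  intro σ n
  obtain ⟨hkV, hkW⟩ := key σ n
  refine ⟨⟨?_, ?_⟩, ?_, ?_⟩
  · exact (hV.disjoint.mono inf_le_right inf_le_right)
  · refine le_antisymm (sup_le inf_le_left inf_le_left) fun x hx => ?_
    have h1 : pV x ∈ Fsig V W σ n ⊓ V 0 := ⟨hkV x hx, hpVmem x⟩
    have h2 : x - pV x ∈ Fsig V W σ n ⊓ V 1 :=
      ⟨Submodule.sub_mem _ hx (hkV x hx), hpVsub x⟩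
    have : x = pV x + (x - pV x) := by abel
    rw [this]
    exact Submodule.add_mem _ (mem_sup_left h1) (mem_sup_right h2)
  · exact (hW.disjoint.mono inf_le_right inf_le_right)
  · refine le_antisymm (sup_le inf_le_left inf_le_left) fun x hx => ?_
    have h1 : pW x ∈ Fsig V W σ n ⊓ W 0 := ⟨hkW x hx, hpWmem x⟩
    have h2 : x - pW x ∈ Fsig V W σ n ⊓ W 1 :=
      ⟨Submodule.sub_mem _ hx (hkW x hx), hpWsub x⟩
    have : x = pW x + (x - pW x) := by abel
    rw [this]
    exact Submodule.add_mem _ (mem_sup_left h1) (mem_sup_right h2)
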